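/- In the root system of type F_4 with short simple roots α_3, α_4 and long simple roots α_1, α_2, the Coxeter numbers satisfy h_{α_3} = h_{α_4} = 12 = h and h_{α_1} = h_{α_2} = 9, where h = 12 is the Coxeter number of F_4. -/

import Mathlib

open scoped RealInnerProductSpace Classical

/-- `pairing γ α = (γ, α∨) = 2(γ,α)/(α,α)`. -/
noncomputable def pairing {V : Type*} [NormedAddCommGroup V] [InnerProductSpace ℝ V]
    (γ α : V) : ℝ := 2 * ⟪γ, α⟫ / ⟪α, α⟫

/-- The Coxeter number of a root `α`: `h_α = Σ_{γ ∈ Φ⁺, (γ,α∨)>0} (γ, α∨)`. -/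
noncomputable def coxeterOf {V : Type*} [NormedAddCommGroup V] [InnerProductSpace ℝ V]
    (Pos : Finset V) (α : V) : ℝ :=
  ∑ γ ∈ Pos.filter (fun γ => 0 < pairing γ α), pairing γ α

/-- Standard basis vector of `ℝ⁴`. -/
noncomputable def f4e (i : Fin 4) : EuclideanSpace ℝ (Fin 4) :=
  EuclideanSpace.single i (1 : ℝ)

/-- `±1` sign attached to a boolean. -/
def sgn (b : Bool) : ℝ := if b then 1 else -1

/-- The positive roots of `F_4` (realised in `ℝ⁴`): `e_i`; `e_i ± e_j` for
`i < j`; and `(e_1 ± e_2 ± e_3 ± e_4)/2`. -/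
noncomputable def F4pos : Finset (EuclideanSpace ℝ (Fin 4)) :=
  (Finset.univ.image fun i : Fin 4 => f4e i) ∪
    ((Finset.univ.filter fun p : Fin 4 × Fin 4 => p.1 < p.2).image
      fun p => f4e p.1 - f4e p.2) ∪
    ((Finset.univ.filter fun p : Fin 4 × Fin 4 => p.1 < p.2).image
      fun p => f4e p.1 + f4e p.2) ∪
    ((Finset.univ : Finset (Bool × Bool × Bool)).image
      fun s => (2⁻¹ : ℝ) • (f4e 0 + sgn s.1 • f4e 1 + sgn s.2.1 • f4e 2 + sgn s.2.2 • f4e 3))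

/-- The long simple root `α_1 = e_2 − e_3` of `F_4` (Bourbaki ordering). -/
noncomputable def f4alpha1 : EuclideanSpace ℝ (Fin 4) := f4e 1 - f4e 2

/-- The long simple root `α_2 = e_3 − e_4` of `F_4`. -/
noncomputable def f4alpha2 : EuclideanSpace ℝ (Fin 4) := f4e 2 - f4e 3

/-- The short simple root `α_3 = e_4` of `F_4`. -/
noncomputable def f4alpha3 : EuclideanSpace ℝ (Fin 4) := f4e 3

/-- The short simple root `α_4 = (e_1 − e_2 − e_3 − e_4)/2` of `F_4`. -/
noncomputable def f4alpha4 : EuclideanSpace ℝ (Fin 4) :=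
  (2⁻¹ : ℝ) • (f4e 0 - f4e 1 - f4e 2 - f4e 3)

/- integer model: vectors are twice the real roots -/

noncomputable def intV (v : Fin 4 → ℤ) : EuclideanSpace ℝ (Fin 4) :=
  (WithLp.equiv 2 (Fin 4 → ℝ)).symm (fun i => (v i : ℝ) / 2)

lemma toZ_apply (v : Fin 4 → ℤ) (i : Fin 4) : intV v i = (v i : ℝ) / 2 := rfl

lemma intV_toZ_inj : Function.Injective intV := by
  intro a b h
  funext i
  have h2 : intV a i = intV b i := by rw [h]
  rw [toZ_apply, toZ_apply] at h2
  field_simp at h2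
  exact_mod_cast h2

def ze (i : Fin 4) : Fin 4 → ℤ := fun j => if j = i then 1 else 0
def zsgn (b : Bool) : ℤ := if b then 1 else -1

lemma toZ_e (i : Fin 4) : intV (2 • ze i) = f4e i := by
  ext j
  rw [f4e, toZ_apply, EuclideanSpace.single_apply, Pi.smul_apply, ze]
  split <;> norm_num

lemma toZ_sub (a b : Fin 4 → ℤ) : intV (a - b) = intV a - intV b := by
  ext j
  have : (intV a - intV b) j = intV a j - intV b j := rfl
  rw [this, toZ_apply, toZ_apply, toZ_apply, Pi.sub_apply]
  push_cast; ring

lemma toZ_add (a b : Fin 4 → ℤ) : intV (a + b) = intV a + intV b := by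
  ext j
  have : (intV a + intV b) j = intV a j + intV b j := rfl
  rw [this, toZ_apply, toZ_apply, toZ_apply, Pi.add_apply]
  push_cast; ring

lemma toZ_half (s : Bool × Bool × Bool) :
    (2⁻¹ : ℝ) • (f4e 0 + sgn s.1 • f4e 1 + sgn s.2.1 • f4e 2 + sgn s.2.2 • f4e 3)
      = intV (ze 0 + zsgn s.1 • ze 1 + zsgn s.2.1 • ze 2 + zsgn s.2.2 • ze 3) := by
  obtain ⟨a, b, c⟩ := s
  ext j
  have hl : ((2⁻¹ : ℝ) • (f4e 0 + sgn a • f4e 1 + sgn b • f4e 2 + sgn c • f4e 3)) j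
      = 2⁻¹ * (f4e 0 j + sgn a * f4e 1 j + sgn b * f4e 2 j + sgn c * f4e 3 j) := rfl
  rw [hl, toZ_apply]
  simp only [Pi.add_apply, Pi.smul_apply, smul_eq_mul, ze]
  rw [f4e, f4e, f4e, f4e, EuclideanSpace.single_apply, EuclideanSpace.single_apply,
    EuclideanSpace.single_apply, EuclideanSpace.single_apply]
  cases a <;> cases b <;> cases c <;> fin_cases j <;>
    simp [sgn, zsgn] <;> norm_num

def Zpos : Finset (Fin 4 → ℤ) :=
  (Finset.univ.image fun i => 2 • ze i) ∪
    ((Finset.univ.filter fun p : Fin 4 × Fin 4 => p.1 < p.2).image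
      fun p => 2 • ze p.1 - 2 • ze p.2) ∪
    ((Finset.univ.filter fun p : Fin 4 × Fin 4 => p.1 < p.2).image
      fun p => 2 • ze p.1 + 2 • ze p.2) ∪
    ((Finset.univ : Finset (Bool × Bool × Bool)).image
      fun s => ze 0 + zsgn s.1 • ze 1 + zsgn s.2.1 • ze 2 + zsgn s.2.2 • ze 3)

lemma F4pos_eq : F4pos = Zpos.image intV := by
  rw [F4pos, Zpos]
  rw [Finset.image_union, Finset.image_union, Finset.image_union,
    Finset.image_image, Finset.image_image, Finset.image_image, Finset.image_image]
  congr 1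
  congr 1
  congr 1
  · exact Finset.image_congr fun i _ => (toZ_e i).symm
  · exact Finset.image_congr fun p _ => by
      simp only [Function.comp_apply, toZ_sub, toZ_e]
  · exact Finset.image_congr fun p _ => by
      simp only [Function.comp_apply, toZ_add, toZ_e]
  · exact Finset.image_congr fun s _ => toZ_half s

def zdot (a b : Fin 4 → ℤ) : ℤ := a 0 * b 0 + a 1 * b 1 + a 2 * b 2 + a 3 * b 3

lemma inner_intV (a b : Fin 4 → ℤ) :
    ⟪intV a, intV b⟫ = ((zdot a b : ℤ) : ℝ) / 4 := by
  simp [PiLp.inner_apply, RCLike.inner_apply, toZ_apply, Fin.sum_univ_four, zdot]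
  push_cast
  ring

lemma pairing_intV (a b : Fin 4 → ℤ) :
    pairing (intV a) (intV b) = 2 * ((zdot a b : ℤ) : ℝ) / ((zdot b b : ℤ) : ℝ) := by
  rw [pairing, inner_intV, inner_intV]
  rcases eq_or_ne ((zdot b b : ℤ) : ℝ) 0 with h | h
  · rw [h]; simp
  · field_simp
    try ring

lemma coxeterOf_intV (b : Fin 4 → ℤ) (hb : 0 < zdot b b) :
    coxeterOf F4pos (intV b)
      = ((∑ γ ∈ Zpos.filter (fun γ => 0 < zdot γ b), 2 * zdot γ b : ℤ) : ℝ)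
          / ((zdot b b : ℤ) : ℝ) := by
  have hbR : (0:ℝ) < ((zdot b b : ℤ) : ℝ) := by exact_mod_cast hb
  rw [coxeterOf, F4pos_eq, Finset.filter_image,
    Finset.sum_image (fun x _ y _ h => intV_toZ_inj h)]
  rw [show (Zpos.filter fun a => 0 < pairing (intV a) (intV b))
      = Zpos.filter (fun γ => 0 < zdot γ b) from Finset.filter_congr fun γ _ => by
        rw [pairing_intV, lt_div_iff₀ hbR, zero_mul]
        constructor
        · intro h
          have h2 : (0:ℝ) < ((zdot γ b : ℤ) : ℝ) := by linarith
          exact_mod_cast h2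
        · intro h
          have h2 : (0:ℝ) < ((zdot γ b : ℤ) : ℝ) := by exact_mod_cast h
          linarith]
  rw [Finset.sum_congr rfl fun γ _ => pairing_intV γ b, ← Finset.sum_div]
  push_cast
  ring


/-- In `F_4` with short simple roots `α_3, α_4` and long simple roots
`α_1, α_2`: `h_{α_3} = h_{α_4} = 12 = h`, the Coxeter number of `F_4`,
and `h_{α_1} = h_{α_2} = 9`. -/
theorem f4_coxeterOf :
    coxeterOf F4pos f4alpha3 = 12 ∧ coxeterOf F4pos f4alpha4 = 12 ∧
    coxeterOf F4pos f4alpha1 = 9 ∧ coxeterOf F4pos f4alpha2 = 9 := by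
  have e1 : f4alpha1 = intV (2 • ze 1 - 2 • ze 2) := by
    rw [f4alpha1, toZ_sub, toZ_e, toZ_e]
  have e2 : f4alpha2 = intV (2 • ze 2 - 2 • ze 3) := by
    rw [f4alpha2, toZ_sub, toZ_e, toZ_e]
  have e3 : f4alpha3 = intV (2 • ze 3) := by rw [f4alpha3, toZ_e]
  have e4 : f4alpha4 = intV (ze 0 + zsgn false • ze 1 + zsgn false • ze 2 + zsgn false • ze 3) := by
    rw [← toZ_half (false, false, false), f4alpha4]
    norm_num [sgn]
    module
  rw [e1, e2, e3, e4, coxeterOf_intV _ (by decide), coxeterOf_intV _ (by decide),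
    coxeterOf_intV _ (by decide), coxeterOf_intV _ (by decide)]
  refine ⟨?_, ?_, ?_, ?_⟩
  · rw [show (∑ γ ∈ Zpos.filter (fun γ => 0 < zdot γ (2 • ze 3)),
        2 * zdot γ (2 • ze 3) : ℤ) = 48 from by decide,
      show zdot (2 • ze 3) (2 • ze 3) = 4 from by decide]
    norm_num
  · rw [show (∑ γ ∈ Zpos.filter (fun γ => 0 < zdot γ
        (ze 0 + zsgn false • ze 1 + zsgn false • ze 2 + zsgn false • ze 3)),
        2 * zdot γ (ze 0 + zsgn false • ze 1 + zsgn false • ze 2 + zsgn false • ze 3) : ℤ)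
        = 48 from by decide,
      show zdot (ze 0 + zsgn false • ze 1 + zsgn false • ze 2 + zsgn false • ze 3)
        (ze 0 + zsgn false • ze 1 + zsgn false • ze 2 + zsgn false • ze 3) = 4 from by decide]
    norm_num
  · rw [show (∑ γ ∈ Zpos.filter (fun γ => 0 < zdot γ (2 • ze 1 - 2 • ze 2)),
        2 * zdot γ (2 • ze 1 - 2 • ze 2) : ℤ) = 72 from by decide,
      show zdot (2 • ze 1 - 2 • ze 2) (2 • ze 1 - 2 • ze 2) = 8 from by decide]
    norm_num
  · rw [show (∑ γ ∈ Zpos.filter (fun γ => 0 < zdot γ (2 • ze 2 - 2 • ze 3)),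
        2 * zdot γ (2 • ze 2 - 2 • ze 3) : ℤ) = 72 from by decide,
      show zdot (2 • ze 2 - 2 • ze 3) (2 • ze 2 - 2 • ze 3) = 8 from by decide]
    norm_num
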